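/- The eigenvalues of the 4n×4n real matrix A(λ) = [[−τ·I + ψ·J, −ρ·I], [σ·I, τ·I + ψ·J]] (where I = I_{2n}, J = J_{2n}, and τ, ψ, ρ, σ are real scalars) are exactly the complex numbers μ satisfying ((μ² − τ² − ψ² + ρσ)² + 4μ²ψ²) = 0, i.e. the characteristic polynomial of A(λ) is ((μ² − τ² − ψ² + ρσ)² + 4μ²ψ²)^n. -/
import Mathlib


/-- The standard symplectic matrix `J_{2n}` over `ℂ`, indexed by `Fin n ⊕ Fin n`. -/
def JstdC (n : ℕ) : Matrix (Fin n ⊕ Fin n) (Fin n ⊕ Fin n) ℂ :=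
  Matrix.fromBlocks 0 (-1) 1 0

open Matrix Kronecker in
/-- Reindexing equivalence identifying `(Fin n ⊕ Fin n) ⊕ (Fin n ⊕ Fin n)` with `Fin 4 × Fin n`. -/
def myEqv (n : ℕ) : ((Fin n ⊕ Fin n) ⊕ (Fin n ⊕ Fin n)) ≃ (Fin 4 × Fin n) where
  toFun x := match x with
    | Sum.inl (Sum.inl i) => (0, i)
    | Sum.inl (Sum.inr i) => (1, i)
    | Sum.inr (Sum.inl i) => (2, i)
    | Sum.inr (Sum.inr i) => (3, i)
  invFun p := ![Sum.inl ∘ Sum.inl, Sum.inl ∘ Sum.inr, Sum.inr ∘ Sum.inl, Sum.inr ∘ Sum.inr] p.1 p.2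
  left_inv := by rintro ((i|i)|(i|i)) <;> rfl
  right_inv := by rintro ⟨k, i⟩; fin_cases k <;> rfl

open Matrix Kronecker in
/-- The characteristic polynomial of the `4n × 4n` real matrix
`A = [[−τ·I + ψ·J, −ρ·I], [σ·I, τ·I + ψ·J]]` (with `I = I_{2n}`, `J = J_{2n}`) is
`((μ² − τ² − ψ² + ρσ)² + 4μ²ψ²)^n`; hence its eigenvalues are exactly the complex `μ`
satisfying `(μ² − τ² − ψ² + ρσ)² + 4μ²ψ² = 0`. -/
theorem stmt_11 (n : ℕ) (τ ψ ρ σ : ℝ) (μ : ℂ) :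
    (Matrix.fromBlocks
        (-(τ : ℂ) • (1 : Matrix (Fin n ⊕ Fin n) (Fin n ⊕ Fin n) ℂ) + (ψ : ℂ) • JstdC n)
        (-(ρ : ℂ) • (1 : Matrix (Fin n ⊕ Fin n) (Fin n ⊕ Fin n) ℂ))
        ((σ : ℂ) • (1 : Matrix (Fin n ⊕ Fin n) (Fin n ⊕ Fin n) ℂ))
        ((τ : ℂ) • (1 : Matrix (Fin n ⊕ Fin n) (Fin n ⊕ Fin n) ℂ) + (ψ : ℂ) • JstdC n)
      - μ • 1).det
      = ((μ ^ 2 - (τ : ℂ) ^ 2 - (ψ : ℂ) ^ 2 + (ρ : ℂ) * (σ : ℂ)) ^ 2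
          + 4 * μ ^ 2 * (ψ : ℂ) ^ 2) ^ n := by
  set K : Matrix (Fin 4) (Fin 4) ℂ :=
    !![-(τ:ℂ) - μ, -(ψ:ℂ), -(ρ:ℂ), 0;
       (ψ:ℂ), -(τ:ℂ) - μ, 0, -(ρ:ℂ);
       (σ:ℂ), 0, (τ:ℂ) - μ, -(ψ:ℂ);
       0, (σ:ℂ), (ψ:ℂ), (τ:ℂ) - μ] with hK
  have hM : (Matrix.fromBlocks
        (-(τ : ℂ) • (1 : Matrix (Fin n ⊕ Fin n) (Fin n ⊕ Fin n) ℂ) + (ψ : ℂ) • JstdC n)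
        (-(ρ : ℂ) • (1 : Matrix (Fin n ⊕ Fin n) (Fin n ⊕ Fin n) ℂ))
        ((σ : ℂ) • (1 : Matrix (Fin n ⊕ Fin n) (Fin n ⊕ Fin n) ℂ))
        ((τ : ℂ) • (1 : Matrix (Fin n ⊕ Fin n) (Fin n ⊕ Fin n) ℂ) + (ψ : ℂ) • JstdC n)
      - μ • 1)
      = (K ⊗ₖ (1 : Matrix (Fin n) (Fin n) ℂ)).submatrix (myEqv n) (myEqv n) := by
    ext i j
    rcases i with (i|i)|(i|i) <;> rcases j with (j|j)|(j|j) <;>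
      simp [myEqv, JstdC, Matrix.one_apply, hK, Matrix.fromBlocks] <;>
      split <;> ring
  rw [hM, Matrix.det_submatrix_equiv_self, Matrix.det_kronecker, Matrix.det_one, one_pow,
    mul_one, Fintype.card_fin]
  congr 1
  simp [hK, Matrix.det_succ_row_zero, Fin.sum_univ_succ, Fin.succAbove]
  ring
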